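/- Let L be an even integral lattice of rank 3 whose discriminant group L*/L is an elementary abelian 2-group, and suppose the set Φ of roots (norm-2 vectors) of L spans L ⊗ ℚ. If Φ contains two linearly independent non-orthogonal roots, then the root system of L has type A₃ or A₂A₁, and in both cases the discriminant group fails to be elementary abelian 2; hence Φ is of type A₁³ and L is the orthogonal sum of three rank-1 lattices each generated by a root. -/

import Mathlib

lemma aux16 (a A D : ℤ) (h : (16:ℤ) ∣ 2*a^2 - 8*a*A + 12*A^2 + 4*D^2) :
    (4:ℤ) ∣ a ∧ (2:ℤ) ∣ (A - D) := by
  have key : ∀ x y z : ZMod 16, 2*x^2 - 8*x*y + 12*y^2 + 4*z^2 = 0 →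
      (ZMod.castHom (by norm_num : (4:ℕ) ∣ 16) (ZMod 4) x = 0 ∧
       ZMod.castHom (by norm_num : (2:ℕ) ∣ 16) (ZMod 2) (y - z) = 0) := by decide
  have h16 : ((2*a^2 - 8*a*A + 12*A^2 + 4*D^2 : ℤ) : ZMod 16) = 0 :=
    (ZMod.intCast_zmod_eq_zero_iff_dvd _ 16).2 h
  push_cast at h16
  obtain ⟨h4, h2⟩ := key a A D h16
  constructor
  · rw [map_intCast] at h4
    exact (ZMod.intCast_zmod_eq_zero_iff_dvd _ 4).1 h4
  · rw [show ((A:ZMod 16) - (D:ZMod 16) : ZMod 16) = ((A - D : ℤ) : ZMod 16) by push_cast; ring] at h2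
    rw [map_intCast] at h2
    exact (ZMod.intCast_zmod_eq_zero_iff_dvd _ 2).1 h2

lemma aux9 (a b : ℤ) (h3 : (3:ℤ) ∣ a + b) (h9 : (9:ℤ) ∣ a^2 + b^2 - a*b) :
    (3:ℤ) ∣ a ∧ (3:ℤ) ∣ b := by
  have key : ∀ x y : ZMod 9, ZMod.castHom (by norm_num : (3:ℕ) ∣ 9) (ZMod 3) (x+y) = 0 →
      x^2 + y^2 - x*y = 0 →
      (ZMod.castHom (by norm_num : (3:ℕ) ∣ 9) (ZMod 3) x = 0 ∧
       ZMod.castHom (by norm_num : (3:ℕ) ∣ 9) (ZMod 3) y = 0) := by decide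
  have h9' : ((a^2 + b^2 - a*b : ℤ) : ZMod 9) = 0 :=
    (ZMod.intCast_zmod_eq_zero_iff_dvd _ 9).2 h9
  have h3' : ((a + b : ℤ) : ZMod 3) = 0 := (ZMod.intCast_zmod_eq_zero_iff_dvd _ 3).2 h3
  push_cast at h9'
  obtain ⟨ha, hb⟩ := key a b (by
    rw [show ((a:ZMod 9) + (b:ZMod 9) : ZMod 9) = ((a+b:ℤ):ZMod 9) by push_cast; ring,
      map_intCast]; exact h3') h9'
  rw [map_intCast] at ha hb
  exact ⟨(ZMod.intCast_zmod_eq_zero_iff_dvd _ 3).1 ha, (ZMod.intCast_zmod_eq_zero_iff_dvd _ 3).1 hb⟩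

lemma aux4 (a b c : ℤ) (h : (4:ℤ) ∣ a^2 + b^2 + c^2) :
    (2:ℤ) ∣ a ∧ (2:ℤ) ∣ b ∧ (2:ℤ) ∣ c := by
  have key : ∀ x y z : ZMod 4, x^2 + y^2 + z^2 = 0 →
      (ZMod.castHom (by norm_num : (2:ℕ) ∣ 4) (ZMod 2) x = 0 ∧
       ZMod.castHom (by norm_num : (2:ℕ) ∣ 4) (ZMod 2) y = 0 ∧
       ZMod.castHom (by norm_num : (2:ℕ) ∣ 4) (ZMod 2) z = 0) := by decide
  have h' : ((a^2 + b^2 + c^2 : ℤ) : ZMod 4) = 0 :=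
    (ZMod.intCast_zmod_eq_zero_iff_dvd _ 4).2 h
  push_cast at h'
  obtain ⟨ha, hb, hc⟩ := key a b c h'
  rw [map_intCast] at ha hb hc
  exact ⟨(ZMod.intCast_zmod_eq_zero_iff_dvd _ 2).1 ha,
    (ZMod.intCast_zmod_eq_zero_iff_dvd _ 2).1 hb,
    (ZMod.intCast_zmod_eq_zero_iff_dvd _ 2).1 hc⟩

lemma aux2 (d m : ℤ) (h : d^2 = 4*m) : (2:ℤ) ∣ d := by
  rcases Int.even_or_odd d with he | ho
  · exact he.two_dvd
  · obtain ⟨k, hk⟩ := ho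
    exfalso
    have : (2*k+1)^2 = 4*m := by rw [← hk]; exact h
    have h2 : 4*(k*k) + 4*k + 1 = 4*m := by ring_nf at this ⊢; linarith [this]
    omega

section
variable {V : Type*} [AddCommGroup V] [Module ℚ V]

lemma root_pairing
    (B : LinearMap.BilinForm ℚ V)
    (hsymm : ∀ x y : V, B x y = B y x)
    (hpos : ∀ v : V, v ≠ 0 → 0 < B v v)
    {r s : V} (hr2 : B r r = 2) (hs2 : B s s = 2)
    (hindep : ∀ c : ℚ, s ≠ c • r) {n : ℤ} (hn : B r s = n) :
    n = -1 ∨ n = 0 ∨ n = 1 := by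
  have hsr : B s r = n := (hsymm s r).trans hn
  set v : V := (n:ℚ) • r - (2:ℚ) • s with hv
  have hvne : v ≠ 0 := by
    intro h
    apply hindep ((n:ℚ)/2)
    have : (n:ℚ) • r = (2:ℚ) • s := by
      rw [hv, sub_eq_zero] at h; exact h
    calc s = ((1:ℚ)/2) • ((2:ℚ) • s) := by rw [smul_smul]; norm_num
    _ = ((1:ℚ)/2) • ((n:ℚ) • r) := by rw [this]
    _ = ((n:ℚ)/2) • r := by rw [smul_smul]; ring_nf
  have hBv := hpos v hvne
  have hval : B v v = 8 - 2*(n:ℚ)^2 := by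
    rw [hv]
    simp only [map_sub, map_smul, LinearMap.sub_apply, LinearMap.smul_apply,
      smul_eq_mul, hr2, hs2, hn, hsr]
    ring
  rw [hval] at hBv
  have h4 : (n:ℚ)^2 < 4 := by linarith
  have h4' : n^2 < 4 := by exact_mod_cast h4
  have h1 : -1 ≤ n := by nlinarith
  have h2 : n ≤ 1 := by nlinarith
  omega

lemma span_pair_ne_top (hdim : Module.finrank ℚ V = 3) (a b : V) :
    Submodule.span ℚ ({a, b} : Set V) ≠ ⊤ := by
  intro h
  classical
  haveI : Fintype ↑({a, b} : Set V) := Set.fintypeInsert a {b}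
  have hcard := finrank_span_le_card (R := ℚ) ({a, b} : Set V)
  rw [h, finrank_top, hdim] at hcard
  have : ({a, b} : Set V).toFinset.card ≤ 2 := by
    rw [Set.toFinset_insert, Set.toFinset_singleton]
    exact (Finset.card_insert_le _ _).trans (by simp)
  omega

lemma configX
    (hdim : Module.finrank ℚ V = 3)
    (B : LinearMap.BilinForm ℚ V)
    (hsymm : ∀ x y : V, B x y = B y x)
    (L : Submodule ℤ V)
    (hint : ∀ x ∈ L, ∀ y ∈ L, ∃ n : ℤ, B x y = n)
    (heven : ∀ x ∈ L, ∃ n : ℤ, B x x = 2 * n)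
    (hdisc : ∀ x : V, (∀ y ∈ L, ∃ n : ℤ, B x y = n) → (2 : ℚ) • x ∈ L)
    (p q u : V) (hp : p ∈ L) (hq : q ∈ L) (hu : u ∈ L)
    (hpp : B p p = 2) (hqq : B q q = 2) (huu : B u u = 2)
    (hpq : B p q = -1) (hqu : B q u = -1) (hpu : B p u = 0) : False := by
  have hqp : B q p = -1 := (hsymm q p).trans hpq
  have huq : B u q = -1 := (hsymm u q).trans hqu
  have hup : B u p = 0 := (hsymm u p).trans hpu
  -- linear independence
  have hI : LinearIndependent ℚ ![p, q, u] := by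
    rw [Fintype.linearIndependent_iff]
    intro g hg
    rw [Fin.sum_univ_three] at hg
    simp only [Matrix.cons_val_zero, Matrix.cons_val_one, Matrix.head_cons,
      Matrix.cons_val_two, Matrix.tail_cons] at hg
    have e1 := congrArg (B p) hg
    have e2 := congrArg (B q) hg
    have e3 := congrArg (B u) hg
    simp only [map_add, map_smul, smul_eq_mul, map_zero, hpp, hqq, huu, hpq, hqu, hpu,
      hqp, huq, hup] at e1 e2 e3
    intro i
    fin_cases i <;> simp <;> linarith
  have hT : Submodule.span ℚ (Set.range ![p, q, u]) = ⊤ :=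
    hI.span_eq_top_of_card_eq_finrank (by simp [hdim])
  -- integrality of coordinates
  have coords : ∀ y ∈ L, ∃ i j k : ℤ, y = (i:ℚ) • p + (j:ℚ) • q + (k:ℚ) • u := by
    intro y hy
    have hymem : y ∈ Submodule.span ℚ (Set.range ![p, q, u]) := hT ▸ Submodule.mem_top
    rw [Submodule.mem_span_range_iff_exists_fun] at hymem
    obtain ⟨cf, hcf⟩ := hymem
    rw [Fin.sum_univ_three] at hcf
    simp only [Matrix.cons_val_zero, Matrix.cons_val_one, Matrix.head_cons,
      Matrix.cons_val_two, Matrix.tail_cons] at hcf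
    set α := cf 0 with hα
    set β := cf 1 with hβ
    set γ := cf 2 with hγ
    obtain ⟨A, hA⟩ := hint p hp y hy
    obtain ⟨C, hC⟩ := hint q hq y hy
    obtain ⟨D, hD⟩ := hint u hu y hy
    obtain ⟨n, hn⟩ := heven y hy
    have eA : (A:ℚ) = 2*α - β := by
      rw [← hA, ← hcf]; simp only [map_add, map_smul, smul_eq_mul, hpp, hpq, hpu]; ring
    have eC : (C:ℚ) = -α + 2*β - γ := by
      rw [← hC, ← hcf]; simp only [map_add, map_smul, smul_eq_mul, hqp, hqq, hqu]; ring
    have eD : (D:ℚ) = -β + 2*γ := by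
      rw [← hD, ← hcf]; simp only [map_add, map_smul, smul_eq_mul, hup, huq, huu]; ring
    have hyy : 2*(n:ℚ) = α*(A:ℚ) + β*(C:ℚ) + γ*(D:ℚ) := by
      rw [← hn]
      nth_rewrite 2 [← hcf]
      simp only [map_add, map_smul, smul_eq_mul]
      rw [hsymm y p, hsymm y q, hsymm y u, hA, hC, hD]
    rw [eA, eC, eD] at hyy
    have hE : 2*(3*A+2*C+D)^2 - 8*(3*A+2*C+D)*A + 12*A^2 + 4*D^2 = 16*n := by
      have : ((2*(3*A+2*C+D)^2 - 8*(3*A+2*C+D)*A + 12*A^2 + 4*D^2 : ℤ) : ℚ) = ((16*n : ℤ) : ℚ) := by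
        push_cast
        rw [eA, eC, eD]
        linear_combination (-8 : ℚ) * hyy
      exact_mod_cast this
    obtain ⟨h4a, h2AD⟩ := aux16 (3*A+2*C+D) A D ⟨n, hE⟩
    obtain ⟨a', ha'⟩ := h4a
    obtain ⟨e, he⟩ := h2AD
    refine ⟨a', 2*a' - A, a' - e, ?_⟩
    have hαv : α = ((a' : ℤ) : ℚ) := by
      have h1 : (4:ℚ)*α = ((3*A+2*C+D : ℤ) : ℚ) := by push_cast; rw [eA, eC, eD]; ring
      rw [ha'] at h1; push_cast at h1 ⊢; linarith
    have hβv : β = ((2*a' - A : ℤ) : ℚ) := by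
      have h1 : (4:ℚ)*β = ((2*(3*A+2*C+D) - 4*A : ℤ) : ℚ) := by push_cast; rw [eA, eC, eD]; ring
      rw [ha'] at h1; push_cast at h1 ⊢; linarith
    have hγv : γ = ((a' - e : ℤ) : ℚ) := by
      have h1 : (4:ℚ)*γ = (((3*A+2*C+D) - 2*(A - D) : ℤ) : ℚ) := by push_cast; rw [eA, eC, eD]; ring
      rw [ha', he] at h1; push_cast at h1 ⊢; linarith
    rw [← hcf, hαv, hβv, hγv]
  -- the dual vector
  set x : V := (3/4 : ℚ) • p + (1/2 : ℚ) • q + (1/4 : ℚ) • u with hx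
  have hxp : B x p = 1 := by
    rw [hx]; simp only [map_add, map_smul, LinearMap.add_apply, LinearMap.smul_apply,
      smul_eq_mul, hpp, hqp, hup]; ring
  have hxq : B x q = 0 := by
    rw [hx]; simp only [map_add, map_smul, LinearMap.add_apply, LinearMap.smul_apply,
      smul_eq_mul, hpq, hqq, huq]; ring
  have hxu : B x u = 0 := by
    rw [hx]; simp only [map_add, map_smul, LinearMap.add_apply, LinearMap.smul_apply,
      smul_eq_mul, hpu, hqu, huu]; ring
  have hdual : ∀ y ∈ L, ∃ m : ℤ, B x y = m := by
    intro y hy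
    obtain ⟨i, j, k, rfl⟩ := coords y hy
    exact ⟨i, by simp only [map_add, map_smul, smul_eq_mul, hxp, hxq, hxu]; ring⟩
  have h2x := hdisc x hdual
  obtain ⟨m, hm⟩ := hdual _ h2x
  have hxx : B x x = 3/4 := by
    nth_rewrite 1 [hx]
    simp only [map_add, map_smul, LinearMap.add_apply, LinearMap.smul_apply, smul_eq_mul,
      hsymm p x, hsymm q x, hsymm u x, hxp, hxq, hxu]
    ring
  rw [map_smul, smul_eq_mul, hxx] at hm
  have : (2*m : ℤ) = 3 := by exact_mod_cast (by linarith : (2 : ℚ)*m = 3)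
  omega

lemma configY
    (hdim : Module.finrank ℚ V = 3)
    (B : LinearMap.BilinForm ℚ V)
    (hsymm : ∀ x y : V, B x y = B y x)
    (L : Submodule ℤ V)
    (hint : ∀ x ∈ L, ∀ y ∈ L, ∃ n : ℤ, B x y = n)
    (heven : ∀ x ∈ L, ∃ n : ℤ, B x x = 2 * n)
    (hdisc : ∀ x : V, (∀ y ∈ L, ∃ n : ℤ, B x y = n) → (2 : ℚ) • x ∈ L)
    (p q u : V) (hp : p ∈ L) (hq : q ∈ L) (hu : u ∈ L)
    (hpp : B p p = 2) (hqq : B q q = 2) (huu : B u u = 2)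
    (hpq : B p q = -1) (hpu : B p u = 0) (hqu : B q u = 0) : False := by
  have hqp : B q p = -1 := (hsymm q p).trans hpq
  have huq : B u q = 0 := (hsymm u q).trans hqu
  have hup : B u p = 0 := (hsymm u p).trans hpu
  have hI : LinearIndependent ℚ ![p, q, u] := by
    rw [Fintype.linearIndependent_iff]
    intro g hg
    rw [Fin.sum_univ_three] at hg
    simp only [Matrix.cons_val_zero, Matrix.cons_val_one, Matrix.head_cons,
      Matrix.cons_val_two, Matrix.tail_cons] at hg
    have e1 := congrArg (B p) hg
    have e2 := congrArg (B q) hg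
    have e3 := congrArg (B u) hg
    simp only [map_add, map_smul, smul_eq_mul, map_zero, hpp, hqq, huu, hpq, hqu, hpu,
      hqp, huq, hup] at e1 e2 e3
    intro i
    fin_cases i <;> simp <;> linarith
  have hT : Submodule.span ℚ (Set.range ![p, q, u]) = ⊤ :=
    hI.span_eq_top_of_card_eq_finrank (by simp [hdim])
  have coords : ∀ y ∈ L, ∃ i j k : ℤ, y = (i:ℚ) • p + (j:ℚ) • q + (k:ℚ) • u := by
    intro y hy
    have hymem : y ∈ Submodule.span ℚ (Set.range ![p, q, u]) := hT ▸ Submodule.mem_top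
    rw [Submodule.mem_span_range_iff_exists_fun] at hymem
    obtain ⟨cf, hcf⟩ := hymem
    rw [Fin.sum_univ_three] at hcf
    simp only [Matrix.cons_val_zero, Matrix.cons_val_one, Matrix.head_cons,
      Matrix.cons_val_two, Matrix.tail_cons] at hcf
    set α := cf 0 with hα
    set β := cf 1 with hβ
    set γ := cf 2 with hγ
    obtain ⟨A, hA⟩ := hint p hp y hy
    obtain ⟨C, hC⟩ := hint q hq y hy
    obtain ⟨D, hD⟩ := hint u hu y hy
    obtain ⟨n, hn⟩ := heven y hy
    have eA : (A:ℚ) = 2*α - β := by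
      rw [← hA, ← hcf]; simp only [map_add, map_smul, smul_eq_mul, hpp, hpq, hpu]; ring
    have eC : (C:ℚ) = -α + 2*β := by
      rw [← hC, ← hcf]; simp only [map_add, map_smul, smul_eq_mul, hqp, hqq, hqu]; ring
    have eD : (D:ℚ) = 2*γ := by
      rw [← hD, ← hcf]; simp only [map_add, map_smul, smul_eq_mul, hup, huq, huu]; ring
    have hyy : 2*(n:ℚ) = α*(A:ℚ) + β*(C:ℚ) + γ*(D:ℚ) := by
      rw [← hn]
      nth_rewrite 2 [← hcf]
      simp only [map_add, map_smul, smul_eq_mul]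
      rw [hsymm y p, hsymm y q, hsymm y u, hA, hC, hD]
    rw [eA, eC, eD] at hyy
    have hE : 4*((2*A+C)^2 + (A+2*C)^2 - (2*A+C)*(A+2*C)) + 9*D^2 = 36*n := by
      have : ((4*((2*A+C)^2 + (A+2*C)^2 - (2*A+C)*(A+2*C)) + 9*D^2 : ℤ) : ℚ)
          = ((36*n : ℤ) : ℚ) := by
        push_cast
        rw [eA, eC, eD]
        linear_combination (-18 : ℚ) * hyy
      exact_mod_cast this
    have h9 : (9:ℤ) ∣ (2*A+C)^2 + (A+2*C)^2 - (2*A+C)*(A+2*C) := by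
      set X := (2*A+C)^2 + (A+2*C)^2 - (2*A+C)*(A+2*C) with hX
      set D2 := D^2 with hD2
      omega
    obtain ⟨h3a, h3b⟩ := aux9 (2*A+C) (A+2*C) ⟨A+C, by ring⟩ h9
    obtain ⟨a', ha'⟩ := h3a
    obtain ⟨b', hb'⟩ := h3b
    have hαv : α = ((a' : ℤ) : ℚ) := by
      have h1 : (3:ℚ)*α = ((2*A+C : ℤ) : ℚ) := by push_cast; rw [eA, eC]; ring
      rw [ha'] at h1; push_cast at h1 ⊢; linarith
    have hβv : β = ((b' : ℤ) : ℚ) := by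
      have h1 : (3:ℚ)*β = ((A+2*C : ℤ) : ℚ) := by push_cast; rw [eA, eC]; ring
      rw [hb'] at h1; push_cast at h1 ⊢; linarith
    have hDsq : D^2 = 4*(n - a'^2 - b'^2 + a'*b') := by
      have : ((D^2 : ℤ) : ℚ) = ((4*(n - a'^2 - b'^2 + a'*b') : ℤ) : ℚ) := by
        push_cast
        rw [eD, ← hαv, ← hβv]
        linear_combination (-2:ℚ) * hyy
      exact_mod_cast this
    obtain ⟨d', hd'⟩ := aux2 D _ hDsq
    refine ⟨a', b', d', ?_⟩
    have hγv : γ = ((d' : ℤ) : ℚ) := by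
      have h1 : (2:ℚ)*γ = ((D : ℤ) : ℚ) := by rw [eD]
      rw [hd'] at h1; push_cast at h1 ⊢; linarith
    rw [← hcf, hαv, hβv, hγv]
  set x : V := (1/3 : ℚ) • p - (1/3 : ℚ) • q with hx
  have hxp : B x p = 1 := by
    rw [hx]; simp only [map_sub, map_smul, LinearMap.sub_apply, LinearMap.smul_apply,
      smul_eq_mul, hpp, hqp]; ring
  have hxq : B x q = -1 := by
    rw [hx]; simp only [map_sub, map_smul, LinearMap.sub_apply, LinearMap.smul_apply,
      smul_eq_mul, hpq, hqq]; ring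
  have hxu : B x u = 0 := by
    rw [hx]; simp only [map_sub, map_smul, LinearMap.sub_apply, LinearMap.smul_apply,
      smul_eq_mul, hpu, hqu]; ring
  have hdual : ∀ y ∈ L, ∃ m : ℤ, B x y = m := by
    intro y hy
    obtain ⟨i, j, k, rfl⟩ := coords y hy
    exact ⟨i - j, by simp only [map_add, map_smul, smul_eq_mul, hxp, hxq, hxu]; push_cast; ring⟩
  have h2x := hdisc x hdual
  obtain ⟨m, hm⟩ := hdual _ h2x
  have hxx : B x x = 2/3 := by
    nth_rewrite 1 [hx]
    simp only [map_sub, map_smul, LinearMap.sub_apply, LinearMap.smul_apply, smul_eq_mul,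
      hsymm p x, hsymm q x, hxp, hxq]
    ring
  rw [map_smul, smul_eq_mul, hxx] at hm
  have : (3*m : ℤ) = 4 := by exact_mod_cast (by linarith : (3 : ℚ)*m = 4)
  omega

lemma noA2minus (hdim : Module.finrank ℚ V = 3) (B : LinearMap.BilinForm ℚ V)
    (hsymm : ∀ x y : V, B x y = B y x)
    (hpos : ∀ v : V, v ≠ 0 → 0 < B v v)
    (L : Submodule ℤ V)
    (hint : ∀ x ∈ L, ∀ y ∈ L, ∃ n : ℤ, B x y = n)
    (heven : ∀ x ∈ L, ∃ n : ℤ, B x x = 2 * n)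
    (hdisc : ∀ x : V, (∀ y ∈ L, ∃ n : ℤ, B x y = n) → (2 : ℚ) • x ∈ L)
    (hroots : Submodule.span ℚ {r : V | r ∈ L ∧ B r r = 2} = ⊤)
    (p q : V) (hp : p ∈ L) (hq : q ∈ L)
    (hpp : B p p = 2) (hqq : B q q = 2) (hpq : B p q = -1) : False := by
  have hqp : B q p = -1 := (hsymm q p).trans hpq
  -- find a root outside the plane of p and q
  obtain ⟨t, ⟨htL, htt⟩, htout⟩ :
      ∃ t, (t ∈ L ∧ B t t = 2) ∧ t ∉ Submodule.span ℚ ({p, q} : Set V) := by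
    by_contra hc
    push_neg at hc
    apply span_pair_ne_top hdim p q
    apply top_unique
    rw [← hroots]
    exact Submodule.span_le.2 (fun z hz => hc z hz)
  have hpmem : p ∈ Submodule.span ℚ ({p, q} : Set V) :=
    Submodule.subset_span (by simp)
  have hqmem : q ∈ Submodule.span ℚ ({p, q} : Set V) :=
    Submodule.subset_span (by simp)
  have hindp : ∀ c : ℚ, t ≠ c • p := fun c h =>
    htout (h ▸ Submodule.smul_mem _ c hpmem)
  have hindq : ∀ c : ℚ, t ≠ c • q := fun c h =>
    htout (h ▸ Submodule.smul_mem _ c hqmem)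
  obtain ⟨np, hnp⟩ := hint p hp t htL
  obtain ⟨nq, hnq⟩ := hint q hq t htL
  have hNt : ∀ x : V, B x (-t) = - B x t := fun x => map_neg (B x) t
  have htN : B (-t) (-t) = 2 := by
    simp only [map_neg, LinearMap.neg_apply, htt]; norm_num
  have htLm : -t ∈ L := neg_mem htL
  -- p + q is a root, and -p - q
  have hw : B (p + q) (p + q) = 2 := by
    simp only [map_add, LinearMap.add_apply, hpp, hqq, hpq, hqp]; ring
  have hwN : B (-p - q) (-p - q) = 2 := by
    simp only [map_sub, map_neg, LinearMap.sub_apply, LinearMap.neg_apply,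
      hpp, hqq, hpq, hqp]; ring
  have hwL : -p - q ∈ L := sub_mem (neg_mem hp) hq
  rcases root_pairing B hsymm hpos hpp htt hindp hnp with h1 | h1 | h1 <;>
    rcases root_pairing B hsymm hpos hqq htt hindq hnq with h2 | h2 | h2
  -- (−1,−1): t = −(p+q)
  · rw [h1] at hnp; rw [h2] at hnq
    push_cast at hnp hnq
    have htp : B t p = -1 := (hsymm t p).trans hnp
    have htq : B t q = -1 := (hsymm t q).trans hnq
    have hzero : B (p + q + t) (p + q + t) = 0 := by
      simp only [map_add, LinearMap.add_apply, hpp, hqq, htt, hpq, hqp, hnp, hnq, htp, htq]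
      ring
    have hw0 : p + q + t = 0 := by
      by_contra hne
      exact lt_irrefl 0 (hzero ▸ hpos _ hne)
    have h3 : -(p + q) = t := by rw [eq_neg_of_add_eq_zero_left hw0, neg_neg]
    exact htout (h3 ▸ neg_mem (add_mem hpmem hqmem))
  -- (−1,0): configX q p t
  · rw [h1] at hnp; rw [h2] at hnq
    push_cast at hnp hnq
    exact configX hdim B hsymm L hint heven hdisc q p t hq hp htL hqq hpp htt hqp hnp hnq
  -- (−1,1): configX (−p−q) p t
  · rw [h1] at hnp; rw [h2] at hnq
    push_cast at hnp hnq
    have e1 : B (-p - q) p = -1 := by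
      simp only [map_sub, map_neg, LinearMap.sub_apply, LinearMap.neg_apply, hpp, hqp]; ring
    have e2 : B (-p - q) t = 0 := by
      simp only [map_sub, map_neg, LinearMap.sub_apply, LinearMap.neg_apply, hnp, hnq]; ring
    exact configX hdim B hsymm L hint heven hdisc (-p - q) p t hwL hp htL hwN hpp htt e1 hnp e2
  -- (0,−1): configX p q t
  · rw [h1] at hnp; rw [h2] at hnq
    push_cast at hnp hnq
    exact configX hdim B hsymm L hint heven hdisc p q t hp hq htL hpp hqq htt hpq hnq hnp
  -- (0,0): configY p q t
  · rw [h1] at hnp; rw [h2] at hnq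
    push_cast at hnp hnq
    exact configY hdim B hsymm L hint heven hdisc p q t hp hq htL hpp hqq htt hpq hnp hnq
  -- (0,1): configX p q (−t)
  · rw [h1] at hnp; rw [h2] at hnq
    push_cast at hnp hnq
    have e1 : B q (-t) = -1 := by simp [hNt, hnq]
    have e2 : B p (-t) = 0 := by simp [hNt, hnp]
    exact configX hdim B hsymm L hint heven hdisc p q (-t) hp hq htLm hpp hqq htN hpq e1 e2
  -- (1,−1): configX (−p−q) q t
  · rw [h1] at hnp; rw [h2] at hnq
    push_cast at hnp hnq
    have e1 : B (-p - q) q = -1 := by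
      simp only [map_sub, map_neg, LinearMap.sub_apply, LinearMap.neg_apply, hpq, hqq]; ring
    have e2 : B (-p - q) t = 0 := by
      simp only [map_sub, map_neg, LinearMap.sub_apply, LinearMap.neg_apply, hnp, hnq]; ring
    exact configX hdim B hsymm L hint heven hdisc (-p - q) q t hwL hq htL hwN hqq htt e1 hnq e2
  -- (1,0): configX q p (−t)
  · rw [h1] at hnp; rw [h2] at hnq
    push_cast at hnp hnq
    have e1 : B p (-t) = -1 := by simp [hNt, hnp]
    have e2 : B q (-t) = 0 := by simp [hNt, hnq]
    exact configX hdim B hsymm L hint heven hdisc q p (-t) hq hp htLm hqq hpp htN hqp e1 e2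
  -- (1,1): t = p+q
  · rw [h1] at hnp; rw [h2] at hnq
    push_cast at hnp hnq
    have htp : B t p = 1 := (hsymm t p).trans hnp
    have htq : B t q = 1 := (hsymm t q).trans hnq
    have hzero : B (p + q - t) (p + q - t) = 0 := by
      simp only [map_add, map_sub, LinearMap.add_apply, LinearMap.sub_apply,
        hpp, hqq, htt, hpq, hqp, hnp, hnq, htp, htq]
      ring
    have hw0 : p + q - t = 0 := by
      by_contra hne
      exact lt_irrefl 0 (hzero ▸ hpos _ hne)
    exact htout ((sub_eq_zero.mp hw0) ▸ add_mem hpmem hqmem)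

end

theorem rank_three_even_lattice_with_two_elementary_discriminant
    {V : Type*} [AddCommGroup V] [Module ℚ V]
    (hdim : Module.finrank ℚ V = 3)
    (B : LinearMap.BilinForm ℚ V)
    (hsymm : ∀ x y : V, B x y = B y x)
    (hpos : ∀ v : V, v ≠ 0 → 0 < B v v)
    (L : Submodule ℤ V) (hfg : L.FG)
    (hspan : Submodule.span ℚ (L : Set V) = ⊤)
    (hint : ∀ x ∈ L, ∀ y ∈ L, ∃ n : ℤ, B x y = n)
    (heven : ∀ x ∈ L, ∃ n : ℤ, B x x = 2 * n)
    (hdisc : ∀ x : V, (∀ y ∈ L, ∃ n : ℤ, B x y = n) → (2 : ℚ) • x ∈ L)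
    (hroots : Submodule.span ℚ {r : V | r ∈ L ∧ B r r = 2} = ⊤) :
    ∃ r₁ r₂ r₃ : V,
      r₁ ∈ L ∧ r₂ ∈ L ∧ r₃ ∈ L ∧
      B r₁ r₁ = 2 ∧ B r₂ r₂ = 2 ∧ B r₃ r₃ = 2 ∧
      B r₁ r₂ = 0 ∧ B r₁ r₃ = 0 ∧ B r₂ r₃ = 0 ∧
      L = Submodule.span ℤ {r₁, r₂, r₃} := by
  classical
  haveI hFD : FiniteDimensional ℚ V :=
    FiniteDimensional.of_finrank_pos (by rw [hdim]; norm_num)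
  -- orthogonality of any two non-proportional roots
  have korth : ∀ r s : V, r ∈ L → B r r = 2 → s ∈ L → B s s = 2 →
      (∀ c : ℚ, s ≠ c • r) → B r s = 0 := by
    intro r s hrL hr2 hsL hs2 hind
    obtain ⟨n, hn⟩ := hint r hrL s hsL
    rcases root_pairing B hsymm hpos hr2 hs2 hind hn with h | h | h
    · exact absurd (noA2minus hdim B hsymm hpos L hint heven hdisc hroots r s hrL hsL hr2 hs2
        (by rw [hn, h]; norm_num)) (by simp)
    · rw [hn, h]; norm_num
    · exfalso
      have hsL' : -s ∈ L := neg_mem hsL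
      have hs2' : B (-s) (-s) = 2 := by
        simp only [map_neg, LinearMap.neg_apply, hs2]; norm_num
      have hrs' : B r (-s) = -1 := by
        rw [map_neg (B r) s, hn, h]; norm_num
      exact noA2minus hdim B hsymm hpos L hint heven hdisc hroots r (-s) hrL hsL' hr2 hs2' hrs'
  -- a spanning independent triple of roots
  obtain ⟨t, htsub, htspan, htind⟩ :=
    exists_linearIndependent ℚ {r : V | r ∈ L ∧ B r r = 2}
  have htfin : t.Finite := htind.setFinite
  haveI := htfin.fintype
  have hbas : Module.Basis t ℚ V := Module.Basis.mk htind (by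
    rw [Subtype.range_coe, htspan, hroots])
  have hcard : Fintype.card t = 3 := by
    rw [← Module.finrank_eq_card_basis hbas, hdim]
  have hncard : t.ncard = 3 := by
    rw [Set.ncard_eq_toFinset_card', Set.toFinset_card, hcard]
  obtain ⟨r₁, r₂, r₃, h12, h13, h23, rfl⟩ := Set.ncard_eq_three.mp hncard
  have hr₁ : r₁ ∈ L ∧ B r₁ r₁ = 2 := htsub (by simp)
  have hr₂ : r₂ ∈ L ∧ B r₂ r₂ = 2 := htsub (by simp)
  have hr₃ : r₃ ∈ L ∧ B r₃ r₃ = 2 := htsub (by simp)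
  have hspan3 : Submodule.span ℚ ({r₁, r₂, r₃} : Set V) = ⊤ := by
    rw [htspan, hroots]
  -- pairwise independence (else the span would be too small)
  have indep : ∀ a b c : V, ({a, b, c} : Set V) = {r₁, r₂, r₃} →
      ∀ k : ℚ, b ≠ k • a := by
    intro a b c habc k hk
    apply span_pair_ne_top hdim a c
    apply top_unique
    rw [← hspan3, ← habc]
    apply Submodule.span_le.2
    rintro z hz
    simp only [Set.mem_insert_iff, Set.mem_singleton_iff] at hz
    have hamem : a ∈ Submodule.span ℚ ({a, c} : Set V) := Submodule.subset_span (by simp)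
    have hcmem : c ∈ Submodule.span ℚ ({a, c} : Set V) := Submodule.subset_span (by simp)
    rcases hz with rfl | rfl | rfl
    · exact hamem
    · rw [hk]; exact Submodule.smul_mem _ k hamem
    · exact hcmem
  have horth12 : B r₁ r₂ = 0 :=
    korth r₁ r₂ hr₁.1 hr₁.2 hr₂.1 hr₂.2 (indep r₁ r₂ r₃ rfl)
  have horth13 : B r₁ r₃ = 0 :=
    korth r₁ r₃ hr₁.1 hr₁.2 hr₃.1 hr₃.2 (indep r₁ r₃ r₂ (by
      ext z; simp only [Set.mem_insert_iff, Set.mem_singleton_iff]; tauto))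
  have horth23 : B r₂ r₃ = 0 :=
    korth r₂ r₃ hr₂.1 hr₂.2 hr₃.1 hr₃.2 (indep r₂ r₃ r₁ (by
      ext z; simp only [Set.mem_insert_iff, Set.mem_singleton_iff]; tauto))
  have horth21 : B r₂ r₁ = 0 := (hsymm r₂ r₁).trans horth12
  have horth31 : B r₃ r₁ = 0 := (hsymm r₃ r₁).trans horth13
  have horth32 : B r₃ r₂ = 0 := (hsymm r₃ r₂).trans horth23
  refine ⟨r₁, r₂, r₃, hr₁.1, hr₂.1, hr₃.1, hr₁.2, hr₂.2, hr₃.2,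
    horth12, horth13, horth23, ?_⟩
  -- L equals the ℤ-span of the roots
  have hrange : Set.range ![r₁, r₂, r₃] = ({r₁, r₂, r₃} : Set V) := by
    ext z; simp [Matrix.range_cons, Matrix.range_empty]; tauto
  apply le_antisymm
  · intro y hy
    have hymem : y ∈ Submodule.span ℚ (Set.range ![r₁, r₂, r₃]) := by
      rw [hrange, hspan3]; exact Submodule.mem_top
    rw [Submodule.mem_span_range_iff_exists_fun] at hymem
    obtain ⟨cf, hcf⟩ := hymem
    rw [Fin.sum_univ_three] at hcf
    simp only [Matrix.cons_val_zero, Matrix.cons_val_one, Matrix.head_cons,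
      Matrix.cons_val_two, Matrix.tail_cons] at hcf
    set α := cf 0 with hα
    set β := cf 1 with hβ
    set γ := cf 2 with hγ
    obtain ⟨A, hA⟩ := hint r₁ hr₁.1 y hy
    obtain ⟨C, hC⟩ := hint r₂ hr₂.1 y hy
    obtain ⟨D, hD⟩ := hint r₃ hr₃.1 y hy
    obtain ⟨n, hn⟩ := heven y hy
    have eA : (A:ℚ) = 2*α := by
      rw [← hA, ← hcf]
      simp only [map_add, map_smul, smul_eq_mul, hr₁.2, horth12, horth13]; ring
    have eC : (C:ℚ) = 2*β := by
      rw [← hC, ← hcf]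
      simp only [map_add, map_smul, smul_eq_mul, horth21, hr₂.2, horth23]; ring
    have eD : (D:ℚ) = 2*γ := by
      rw [← hD, ← hcf]
      simp only [map_add, map_smul, smul_eq_mul, horth31, horth32, hr₃.2]; ring
    have hyy : 2*(n:ℚ) = α*(A:ℚ) + β*(C:ℚ) + γ*(D:ℚ) := by
      rw [← hn]
      nth_rewrite 2 [← hcf]
      simp only [map_add, map_smul, smul_eq_mul]
      rw [hsymm y r₁, hsymm y r₂, hsymm y r₃, hA, hC, hD]
    rw [eA, eC, eD] at hyy
    have hE : A^2 + C^2 + D^2 = 4*n := by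
      have : ((A^2 + C^2 + D^2 : ℤ) : ℚ) = ((4*n : ℤ) : ℚ) := by
        push_cast
        rw [eA, eC, eD]
        linear_combination (-2 : ℚ) * hyy
      exact_mod_cast this
    obtain ⟨h2A, h2C, h2D⟩ := aux4 A C D ⟨n, hE⟩
    obtain ⟨a', ha'⟩ := h2A
    obtain ⟨c', hc'⟩ := h2C
    obtain ⟨d', hd'⟩ := h2D
    have hαv : α = ((a' : ℤ) : ℚ) := by
      have h1 : (2:ℚ)*α = ((A : ℤ) : ℚ) := by rw [eA]
      rw [ha'] at h1; push_cast at h1 ⊢; linarith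
    have hβv : β = ((c' : ℤ) : ℚ) := by
      have h1 : (2:ℚ)*β = ((C : ℤ) : ℚ) := by rw [eC]
      rw [hc'] at h1; push_cast at h1 ⊢; linarith
    have hγv : γ = ((d' : ℤ) : ℚ) := by
      have h1 : (2:ℚ)*γ = ((D : ℤ) : ℚ) := by rw [eD]
      rw [hd'] at h1; push_cast at h1 ⊢; linarith
    rw [← hcf, hαv, hβv, hγv, Int.cast_smul_eq_zsmul ℚ,
      Int.cast_smul_eq_zsmul ℚ, Int.cast_smul_eq_zsmul ℚ]
    exact add_mem (add_mem
      (Submodule.smul_mem _ a' (Submodule.subset_span (by simp)))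
      (Submodule.smul_mem _ c' (Submodule.subset_span (by simp))))
      (Submodule.smul_mem _ d' (Submodule.subset_span (by simp)))
  · rw [Submodule.span_le]
    rintro z hz
    simp only [Set.mem_insert_iff, Set.mem_singleton_iff] at hz
    rcases hz with rfl | rfl | rfl
    · exact hr₁.1
    · exact hr₂.1
    · exact hr₃.1
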